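/- A closed set Y ⊂ S^d that is complete (i.e., adding any point strictly increases its spherical diameter) with diam_s(Y) ≤ π/2 satisfies Y = Y^{diam_s(Y)}, i.e., Y equals the set of points at spherical distance at most diam_s(Y) from every point of Y; in particular Y is a convex body of constant width diam_s(Y). -/

import Mathlib

open scoped RealInnerProductSpace
open Real

/-- Spherical (geodesic) distance between unit vectors. -/
noncomputable def sdist {n : ℕ} (x y : EuclideanSpace ℝ (Fin n)) : ℝ :=
  Real.arccos ⟪x, y⟫

/-- The unit sphere in `ℝⁿ`. -/
def usphere (n : ℕ) : Set (EuclideanSpace ℝ (Fin n)) := {x | ‖x‖ = 1}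

/-- Spherical diameter of a set. -/
noncomputable def sdiam {n : ℕ} (X : Set (EuclideanSpace ℝ (Fin n))) : ℝ :=
  sSup {δ | ∃ x ∈ X, ∃ y ∈ X, δ = sdist x y}

/-- Closed spherical ball of center `c` and radius `ρ`. -/
def sball {n : ℕ} (c : EuclideanSpace ℝ (Fin n)) (ρ : ℝ) : Set (EuclideanSpace ℝ (Fin n)) :=
  {y | ‖y‖ = 1 ∧ sdist c y ≤ ρ}

/-- The `r`-dual set `X^r` of `X`: points of the sphere within spherical
distance `r` of every point of `X`. -/
def sdual {n : ℕ} (r : ℝ) (X : Set (EuclideanSpace ℝ (Fin n))) :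
    Set (EuclideanSpace ℝ (Fin n)) :=
  {y | ‖y‖ = 1 ∧ ∀ x ∈ X, sdist x y ≤ r}

/-- The shortest geodesic arc between two (non-antipodal) unit vectors:
normalized nonnegative combinations. -/
def geoArc {n : ℕ} (a b : EuclideanSpace ℝ (Fin n)) :
    Set (EuclideanSpace ℝ (Fin n)) :=
  {z | ‖z‖ = 1 ∧ ∃ s t : ℝ, 0 ≤ s ∧ 0 ≤ t ∧ 0 < s + t ∧
    ∃ k : ℝ, 0 < k ∧ z = k • (s • a + t • b)}

/-- Spherical convexity. -/
def SphConvex {n : ℕ} (Q : Set (EuclideanSpace ℝ (Fin n))) : Prop :=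
  Q ⊆ usphere n ∧ (∀ x ∈ Q, -x ∉ Q) ∧ ∀ x ∈ Q, ∀ y ∈ Q, geoArc x y ⊆ Q

/-- Minimal spherical width: infimum of widths of lunes containing `K`. -/
noncomputable def swidth {n : ℕ} (K : Set (EuclideanSpace ℝ (Fin n))) : ℝ :=
  sInf {w | ∃ c₁ c₂ : EuclideanSpace ℝ (Fin n), ‖c₁‖ = 1 ∧ ‖c₂‖ = 1 ∧
    c₁ ≠ c₂ ∧ c₁ ≠ -c₂ ∧ K ⊆ sball c₁ (π / 2) ∩ sball c₂ (π / 2) ∧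
    w = π - sdist c₁ c₂}


lemma sdist_self {n : ℕ} (x : EuclideanSpace ℝ (Fin n)) (hx : ‖x‖ = 1) :
    sdist x x = 0 := by
  have : ⟪x, x⟫ = (1 : ℝ) := by
    rw [real_inner_self_eq_norm_sq, hx]; norm_num
  simp [sdist, this, hx]

lemma sdist_comm {n : ℕ} (x y : EuclideanSpace ℝ (Fin n)) : sdist x y = sdist y x := by
  unfold sdist; rw [real_inner_comm]

lemma sdist_le_sdiam {n : ℕ} {X : Set (EuclideanSpace ℝ (Fin n))}
    {x y : EuclideanSpace ℝ (Fin n)} (hx : x ∈ X) (hy : y ∈ X) :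
    sdist x y ≤ sdiam X := by
  apply le_csSup
  · exact ⟨π, fun δ ⟨a, _, b, _, hδ⟩ => hδ ▸ Real.arccos_le_pi _⟩
  · exact ⟨x, hx, y, hy, rfl⟩

theorem complete_eq_dual (d : ℕ) (Y : Set (EuclideanSpace ℝ (Fin (d + 1))))
    (hYne : Y.Nonempty) (hYc : IsClosed Y) (hYs : Y ⊆ usphere (d + 1))
    (hcomplete : ∀ y, ‖y‖ = 1 → y ∉ Y → sdiam Y < sdiam (Y ∪ {y}))
    (hdiam : sdiam Y ≤ π / 2) :
    Y = sdual (sdiam Y) Y := by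
  apply Set.Subset.antisymm
  · intro y hy
    exact ⟨hYs hy, fun x hx => sdist_le_sdiam hx hy⟩
  · rintro z ⟨hz1, hz2⟩
    by_contra hzY
    have hlt := hcomplete z hz1 hzY
    have hle : sdiam (Y ∪ {z}) ≤ sdiam Y := by
      apply csSup_le
      · obtain ⟨x, hx⟩ := hYne
        exact ⟨sdist x x, x, Or.inl hx, x, Or.inl hx, rfl⟩
      · rintro δ ⟨a, ha, b, hb, rfl⟩
        rcases ha with ha | ha <;> rcases hb with hb | hb
        · exact sdist_le_sdiam ha hb
        · rw [Set.mem_singleton_iff] at hb; subst hb; exact hz2 a ha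
        · rw [Set.mem_singleton_iff] at ha; subst ha
          rw [sdist_comm]; exact hz2 b hb
        · rw [Set.mem_singleton_iff] at ha hb
          obtain ⟨x, hx⟩ := hYne
          rw [ha, hb, sdist_self z hz1]
          calc (0:ℝ) = sdist x x := (sdist_self x (hYs hx)).symm
          _ ≤ sdiam Y := sdist_le_sdiam hx hx
    exact absurd hle (not_le.mpr hlt)
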